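/- Let A be a 5×n real matrix all of whose 4×4 submatrices are tropically singular. Then for each i ∈ {1,…,5} there exists h ∈ ℝ^5 which is an i-coordinate hyperplane for the set of column vectors of A; that is, for every column w of A, the minimum over j of (h_j + w_j) is attained at least twice and is not attained at index i. -/

import Mathlib

noncomputable section

/-- An `m × m` real matrix is tropically singular if the minimum over all permutations `σ`
of `∑ i, M i (σ i)` is attained by at least two distinct permutations. -/
def TropSingular {m : ℕ} (M : Matrix (Fin m) (Fin m) ℝ) : Prop :=
  ∃ σ τ : Equiv.Perm (Fin m), σ ≠ τ ∧
    (∑ i, M i (σ i)) = (∑ i, M i (τ i)) ∧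
    ∀ ρ : Equiv.Perm (Fin m), (∑ i, M i (σ i)) ≤ ∑ i, M i (ρ i)

/-- The type of `w` with respect to `h`: the set of indices at which the minimum of
`h i + w i` is attained. -/
def typeSet (h w : Fin 5 → ℝ) : Set (Fin 5) :=
  {i | ∀ j, h i + w i ≤ h j + w j}

theorem Equiv.Perm.apply_inv_self {α : Type*} (f : Equiv.Perm α) (x : α) : f (f⁻¹ x) = x :=
  f.apply_symm_apply x

namespace TropAux

attribute [local instance] Classical.propDecidable

/-- Both `a` and `b` attain the minimum of `g i + w i`, with `a ≠ b`. -/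
def Bal {ι : Type*} (g w : ι → ℝ) : Prop :=
  ∃ a b : ι, a ≠ b ∧ (∀ i, g a + w a ≤ g i + w i) ∧ (∀ i, g b + w b ≤ g i + w i)

variable {m : ℕ}

/-- Weight of a walk: `pw c [x₀, x₁, …, xₖ] = c x₁ x₀ + c x₂ x₁ + ⋯`. -/
def pw (c : Fin m → Fin m → ℝ) : List (Fin m) → ℝ
  | a :: b :: l => c b a + pw c (b :: l)
  | _ => 0

@[simp] lemma pw_nil (c : Fin m → Fin m → ℝ) : pw c [] = 0 := rfl
@[simp] lemma pw_single (c : Fin m → Fin m → ℝ) (a : Fin m) : pw c [a] = 0 := rfl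
@[simp] lemma pw_cons_cons (c : Fin m → Fin m → ℝ) (a b : Fin m) (l : List (Fin m)) :
    pw c (a :: b :: l) = c b a + pw c (b :: l) := rfl

lemma pw_append (c : Fin m → Fin m → ℝ) (a : Fin m) (t : List (Fin m)) :
    ∀ s : List (Fin m), pw c (s ++ a :: t) = pw c (s ++ [a]) + pw c (a :: t) := by
  intro s
  induction s with
  | nil => simp
  | cons x s' ih =>
    cases s' with
    | nil => simp
    | cons y s'' =>
      simp only [List.cons_append, pw_cons_cons] at *
      rw [ih]; ring

/-- Sum identity for the cyclic permutation of a nodup list. -/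
lemma sum_formPerm (c : Fin m → Fin m → ℝ) (hc : ∀ i, c i i = 0) :
    ∀ (t : List (Fin m)) (a : Fin m), (a :: t).Nodup →
      ∑ i, c ((a :: t).formPerm i) i
        = pw c (a :: t) + c a ((a :: t).getLast (List.cons_ne_nil a t)) := by
  intro t
  induction t with
  | nil =>
    intro a _
    simp [List.formPerm_singleton, hc]
  | cons b t' ih =>
    intro a hnd
    have ha : a ∉ b :: t' := (List.nodup_cons.mp hnd).1
    have hnd' : (b :: t').Nodup := (List.nodup_cons.mp hnd).2
    set ρ' := (b :: t').formPerm with hρ'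
    have hz : (b :: t').getLast (List.cons_ne_nil b t') ∈ b :: t' := List.getLast_mem _
    set z := (b :: t').getLast (List.cons_ne_nil b t') with hzdef
    have haz : a ≠ z := fun h => ha (h ▸ hz)
    have hρ'a : ρ' a = a := List.formPerm_apply_of_notMem ha
    have hρ'z : ρ' z = b := List.formPerm_apply_getLast b t'
    have hform : (a :: b :: t').formPerm = Equiv.swap a b * ρ' :=
      List.formPerm_cons_cons a b t'
    have key : ∀ i : Fin m, i ≠ a → i ≠ z →
        (a :: b :: t').formPerm i = ρ' i := by
      intro i hia hiz
      rw [hform, Equiv.Perm.mul_apply]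
      have h1 : ρ' i ≠ a := by
        intro h; exact hia (ρ'.injective (h.trans hρ'a.symm))
      have h2 : ρ' i ≠ b := by
        intro h; exact hiz (ρ'.injective (h.trans hρ'z.symm))
      exact Equiv.swap_apply_of_ne_of_ne h1 h2
    have hfa : (a :: b :: t').formPerm a = b := by
      rw [hform, Equiv.Perm.mul_apply, hρ'a, Equiv.swap_apply_left]
    have hfz : (a :: b :: t').formPerm z = a := by
      rw [hform, Equiv.Perm.mul_apply, hρ'z, Equiv.swap_apply_right]
    -- sum surgery
    set F := fun i : Fin m => c ((a :: b :: t').formPerm i) i with hF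
    set F' := fun i : Fin m => c (ρ' i) i with hF'
    have hmem_a : a ∈ (Finset.univ.erase z) := by
      simp [haz]
    have e1 : F a + ∑ x ∈ (Finset.univ.erase z).erase a, F x
        = ∑ x ∈ Finset.univ.erase z, F x :=
      Finset.add_sum_erase _ F hmem_a
    have e2 : F z + ∑ x ∈ Finset.univ.erase z, F x = ∑ x, F x :=
      Finset.add_sum_erase _ F (Finset.mem_univ z)
    have e1' : F' a + ∑ x ∈ (Finset.univ.erase z).erase a, F' x
        = ∑ x ∈ Finset.univ.erase z, F' x :=
      Finset.add_sum_erase _ F' hmem_a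
    have e2' : F' z + ∑ x ∈ Finset.univ.erase z, F' x = ∑ x, F' x :=
      Finset.add_sum_erase _ F' (Finset.mem_univ z)
    have ecore : ∑ x ∈ (Finset.univ.erase z).erase a, F x
        = ∑ x ∈ (Finset.univ.erase z).erase a, F' x := by
      apply Finset.sum_congr rfl
      intro x hx
      have hxa : x ≠ a := (Finset.mem_erase.mp hx).1
      have hxz : x ≠ z := (Finset.mem_erase.mp (Finset.mem_erase.mp hx).2).1
      simp only [hF, hF']
      rw [key x hxa hxz]
    have hihs : ∑ i, F' i = pw c (b :: t') + c b z := ih b hnd'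
    have hFa : F a = c b a := by simp only [hF]; rw [hfa]
    have hFz : F z = c a z := by simp only [hF]; rw [hfz]
    have hF'a : F' a = 0 := by simp only [hF']; rw [hρ'a]; exact hc a
    have hF'z : F' z = c b z := by simp only [hF']; rw [hρ'z]
    have hlast : (a :: b :: t').getLast (List.cons_ne_nil _ _) = z := by
      rw [hzdef, List.getLast_cons (List.cons_ne_nil b t')]
    rw [hlast]
    have : ∑ i, F i = pw c (a :: b :: t') + c a z := by
      have h1 : ∑ i, F i = F z + (F a + ∑ x ∈ (Finset.univ.erase z).erase a, F x) := by
        rw [e1, e2]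
      have h2 : ∑ i, F' i = F' z + (F' a + ∑ x ∈ (Finset.univ.erase z).erase a, F' x) := by
        rw [e1', e2']
      rw [ecore] at h1
      rw [hihs] at h2
      have hpw : pw c (a :: b :: t') = c b a + pw c (b :: t') := rfl
      rw [hpw]
      rw [hFa, hFz] at h1
      rw [hF'a, hF'z] at h2
      linarith
    exact this

section Core

variable (N : Matrix (Fin m) (Fin m) ℝ)

/-- Arc cost used by the potential construction. -/
private def cc : Fin m → Fin m → ℝ := fun i j => N i j - N j j

lemma factA (hid : ∀ ρ : Equiv.Perm (Fin m), ∑ i, N i i ≤ ∑ i, N i (ρ i))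
    (ρ : Equiv.Perm (Fin m)) : 0 ≤ ∑ i, cc N (ρ i) i := by
  have h1 : ∑ i, N (ρ i) i = ∑ k, N k (ρ⁻¹ k) := by
    have := Equiv.sum_comp ρ (fun k => N k (ρ⁻¹ k))
    rw [← this]
    apply Finset.sum_congr rfl
    intro i _
    simp
  have h2 : ∑ i, cc N (ρ i) i = (∑ i, N (ρ i) i) - ∑ i, N i i := by
    unfold cc
    rw [Finset.sum_sub_distrib]
  rw [h2, h1]
  have := hid ρ⁻¹
  linarith

lemma cycle_nonneg (hid : ∀ ρ : Equiv.Perm (Fin m), ∑ i, N i i ≤ ∑ i, N i (ρ i))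
    (a : Fin m) (t : List (Fin m)) (hnd : (a :: t).Nodup) :
    0 ≤ pw (cc N) (a :: t) + cc N a ((a :: t).getLast (List.cons_ne_nil a t)) := by
  have hc : ∀ i, cc N i i = 0 := by intro i; unfold cc; ring
  have := sum_formPerm (cc N) hc t a hnd
  rw [← this]
  exact factA N hid ((a :: t).formPerm)

theorem core (π : Equiv.Perm (Fin m)) (hπ : π ≠ 1)
    (hid : ∀ ρ : Equiv.Perm (Fin m), ∑ i, N i i ≤ ∑ i, N i (ρ i))
    (hπe : ∑ i, N i (π i) = ∑ i, N i i) :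
    ∃ g : Fin m → ℝ, ∀ j, Bal g (fun i => N i j) := by
  classical
  set c := cc N with hcdef
  have hc0 : ∀ i, c i i = 0 := by intro i; simp [hcdef, cc]
  -- seed set
  set Z : Finset (Fin m) := Finset.univ.filter (fun j => π j ≠ j) with hZ
  have hZne : Z.Nonempty := by
    by_contra hne
    have hallfix : ∀ x, π x = x := by
      intro x
      by_contra hx
      exact hne ⟨x, by simp [hZ, hx]⟩
    exact hπ (Equiv.ext fun x => hallfix x)
  have hZmem : ∀ {j}, j ∈ Z ↔ π j ≠ j := by
    intro j; simp [hZ]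
  -- all nodup lists as a finset
  set allF : Finset (List (Fin m)) :=
    ((Finset.univ : Finset (Fin m)).toList.sublists.flatMap List.permutations).toFinset
    with hallF
  have hmemF : ∀ l : List (Fin m), l.Nodup → l ∈ allF := by
    intro l hl
    rw [hallF, List.mem_toFinset, List.mem_flatMap]
    refine ⟨(Finset.univ : Finset (Fin m)).toList.filter (fun a => a ∈ l), ?_, ?_⟩
    · exact List.mem_sublists.mpr List.filter_sublist
    · rw [List.mem_permutations]
      apply List.perm_of_nodup_nodup_toFinset_eq hl
      · exact (Finset.nodup_toList _).filter _
      · ext a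
        simp [List.mem_filter]
    
  -- admissible walks from j to Z
  set ok : Fin m → List (Fin m) → Prop :=
    fun j l => l.Nodup ∧ l.head? = some j ∧ ∃ z ∈ Z, l.getLast? = some z with hok
  set S : Fin m → Finset (List (Fin m)) :=
    fun j => allF.filter (ok j) with hS
  have hSmem : ∀ {j l}, ok j l → l ∈ S j := by
    intro j l h
    rw [hS]; exact Finset.mem_filter.mpr ⟨hmemF l h.1, h⟩
  have hSne : ∀ j, (S j).Nonempty := by
    intro j
    by_cases hj : j ∈ Z
    · exact ⟨[j], hSmem ⟨List.nodup_singleton j, rfl, ⟨j, hj, rfl⟩⟩⟩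
    · obtain ⟨z, hz⟩ := hZne
      have hzj : z ≠ j := fun h => hj (h ▸ hz)
      refine ⟨[j, z], hSmem ⟨?_, rfl, ⟨z, hz, rfl⟩⟩⟩
      simp [hzj.symm]
  set ε : Fin m → ℝ := fun j => (S j).inf' (hSne j) (pw c) with hε
  have hεle : ∀ j l, ok j l → ε j ≤ pw c l := by
    intro j l h
    exact Finset.inf'_le _ (hSmem h)
  have hεex : ∀ j, ∃ l, ok j l ∧ ε j = pw c l := by
    intro j
    obtain ⟨l, hl, he⟩ := Finset.exists_mem_eq_inf' (hSne j) (pw c)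
    exact ⟨l, (Finset.mem_filter.mp hl).2, he⟩
  -- triangle inequality
  have hA : ∀ i j, ε j ≤ c i j + ε i := by
    intro i j
    by_cases hij : i = j
    · subst hij; rw [hc0]; linarith
    obtain ⟨l, ⟨hnd, hhd, z, hzZ, hlast⟩, hεi⟩ := hεex i
    obtain ⟨t, rfl⟩ : ∃ t, l = i :: t := by
      cases l with
      | nil => simp at hhd
      | cons x t => exact ⟨t, by rw [show x = i by simpa using hhd]⟩
    by_cases hjl : j ∈ i :: t
    · obtain ⟨s, u, hsu⟩ := List.append_of_mem hjl
      obtain ⟨s₁, rfl⟩ : ∃ s₁, s = i :: s₁ := by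
        cases s with
        | nil =>
          exfalso
          have : i = j := by simpa using congrArg List.head? hsu
          exact hij this
        | cons w s₁ =>
          have hw : i = w := by simpa using congrArg List.head? hsu
          exact ⟨s₁, by rw [hw]⟩
      rw [List.cons_append] at hsu
      have ht : t = s₁ ++ j :: u := by simpa using hsu
      subst ht
      -- suffix j :: u is an admissible walk from j
      have hsub : List.Sublist (j :: u) (i :: (s₁ ++ j :: u)) :=
        List.Sublist.cons i (List.sublist_append_right s₁ (j :: u))
      have hndu : (j :: u).Nodup := hsub.nodup hnd
      have hlastu : (j :: u).getLast? = some z := by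
        have h1 : (i :: (s₁ ++ j :: u)) = (i :: s₁) ++ (j :: u) := by simp
        rw [h1, List.getLast?_append,
          List.getLast?_eq_getLast (l := j :: u) (List.cons_ne_nil j u), Option.some_or] at hlast
        rw [List.getLast?_eq_getLast (l := j :: u) (List.cons_ne_nil j u), hlast]
      have hεju : ε j ≤ pw c (j :: u) := hεle j _ ⟨hndu, rfl, ⟨z, hzZ, hlastu⟩⟩
      -- split the weight
      have hsplit : pw c (i :: (s₁ ++ j :: u)) = pw c ((i :: s₁) ++ [j]) + pw c (j :: u) :=
        pw_append c j u (i :: s₁)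
      -- cycle nonnegativity on prefix
      have hndp : (i :: (s₁ ++ [j])).Nodup := by
        have hsl : List.Sublist ((i :: s₁) ++ [j]) ((i :: s₁) ++ (j :: u)) :=
          List.Sublist.append_left (List.Sublist.cons₂ j (List.nil_sublist u)) (i :: s₁)
        have h2 := hsl.nodup (by simpa using hnd)
        simpa using h2
      have hlastp : (i :: (s₁ ++ [j])).getLast (List.cons_ne_nil _ _) = j := by
        have h1 : (i :: (s₁ ++ [j])) = (i :: s₁) ++ [j] := by simp
        rw [List.getLast_congr _ (by simp) h1]
        simp [List.getLast_append]
      have hcyc := cycle_nonneg N hid i (s₁ ++ [j]) hndp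
      rw [hlastp, ← hcdef] at hcyc
      have hpwp : pw c ((i :: s₁) ++ [j]) = pw c (i :: (s₁ ++ [j])) := by simp
      -- combine
      have hfin : ε j ≤ pw c (i :: (s₁ ++ j :: u)) + c i j := by
        have e1 : pw c (j :: u) = pw c (i :: (s₁ ++ j :: u)) - pw c ((i :: s₁) ++ [j]) := by
          rw [hsplit]; ring
        rw [e1] at hεju
        rw [hpwp] at hεju
        linarith
      rw [← hεi] at hfin
      linarith
    · -- prepend j
      have hok' : ok j (j :: i :: t) := by
        refine ⟨List.nodup_cons.mpr ⟨hjl, hnd⟩, rfl, ⟨z, hzZ, ?_⟩⟩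
        rw [List.getLast?_cons_cons]; exact hlast
      have hle := hεle j _ hok'
      rw [pw_cons_cons] at hle
      rw [← hεi] at hle
      linarith
  -- tight arc at every vertex
  have hB : ∀ j, ∃ i, i ≠ j ∧ ε j = c i j + ε i := by
    intro j
    by_cases hjZ : j ∈ Z
    · -- forcing along π
      set T : Fin m → ℝ := fun j => c (π⁻¹ j) j - ε j + ε (π⁻¹ j) with hT
      have hTnn : ∀ j ∈ Z, 0 ≤ T j := by
        intro j _
        have := hA (π⁻¹ j) j
        simp only [hT]
        linarith
      have hZinv : ∀ {j}, j ∈ Z → π⁻¹ j ∈ Z := by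
        intro j hj
        rw [hZmem] at hj ⊢
        intro h
        apply hj
        conv_lhs => rw [← Equiv.Perm.apply_inv_self π j]
        rw [h]
        exact (Equiv.Perm.apply_inv_self π j)
      have hZfwd : ∀ {j}, j ∈ Z → π j ∈ Z := by
        intro j hj
        rw [hZmem] at hj ⊢
        intro h
        exact hj (π.injective h)
      have hsum1 : ∑ j ∈ Z, ε (π⁻¹ j) = ∑ j ∈ Z, ε j := by
        apply Finset.sum_bij' (fun j _ => π⁻¹ j) (fun i _ => π i)
        · intro a ha; exact hZinv ha
        · intro a ha; exact hZfwd ha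
        · intro a _; simp
        · intro a _; simp
        · intro a _; rfl
      have hsum2 : ∑ j ∈ Z, c (π⁻¹ j) j = ∑ i ∈ Z, c i (π i) := by
        apply Finset.sum_bij' (fun j _ => π⁻¹ j) (fun i _ => π i)
        · intro a ha; exact hZinv ha
        · intro a ha; exact hZfwd ha
        · intro a _; simp
        · intro a _; simp
        · intro a _; simp
      have hsum3 : ∑ i ∈ Z, c i (π i) = ∑ i, c i (π i) := by
        apply Finset.sum_subset (Finset.subset_univ Z)
        intro x _ hx
        rw [hZ] at hx
        simp only [Finset.mem_filter, Finset.mem_univ, true_and, not_not] at hx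
        rw [hx]; exact hc0 x
      have hsum4 : ∑ i, c i (π i) = 0 := by
        have h1 : ∑ i, c i (π i) = (∑ i, N i (π i)) - ∑ i, N (π i) (π i) := by
          simp only [hcdef, cc]
          rw [Finset.sum_sub_distrib]
        have h2 : ∑ i, N (π i) (π i) = ∑ i, N i i :=
          Equiv.sum_comp π (fun k => N k k)
        rw [h1, h2, hπe]; ring
      have hsumT : ∑ j ∈ Z, T j = 0 := by
        simp only [hT]
        rw [Finset.sum_add_distrib, Finset.sum_sub_distrib, hsum1, hsum2, hsum3, hsum4]
        ring
      have hT0 : T j = 0 :=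
        (Finset.sum_eq_zero_iff_of_nonneg hTnn).mp hsumT j hjZ
      refine ⟨π⁻¹ j, ?_, ?_⟩
      · intro h
        have := hZmem.mp hjZ
        apply this
        conv_lhs => rw [← h]
        exact Equiv.Perm.apply_inv_self π j
      · simp only [hT] at hT0
        linarith
    · obtain ⟨l, ⟨hnd, hhd, z, hzZ, hlast⟩, hεj⟩ := hεex j
      obtain ⟨t, rfl⟩ : ∃ t, l = j :: t := by
        cases l with
        | nil => simp at hhd
        | cons x t => exact ⟨t, by rw [show x = j by simpa using hhd]⟩
      obtain ⟨b, u, rfl⟩ : ∃ b u, t = b :: u := by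
        cases t with
        | nil =>
          exfalso
          have hzj : z = j := by simpa using hlast.symm
          exact hjZ (hzj ▸ hzZ)
        | cons b u => exact ⟨b, u, rfl⟩
      have hndt : (b :: u).Nodup := (List.nodup_cons.mp hnd).2
      have hjbu : j ∉ b :: u := (List.nodup_cons.mp hnd).1
      have hbj : b ≠ j := fun h => hjbu (h ▸ List.mem_cons_self (a := b) (l := u))
      have hlastt : (b :: u).getLast? = some z := by
        rwa [List.getLast?_cons_cons] at hlast
      have hεb : ε b ≤ pw c (b :: u) := hεle b _ ⟨hndt, rfl, ⟨z, hzZ, hlastt⟩⟩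
      have h1 : ε j = c b j + pw c (b :: u) := by rw [hεj]; rfl
      have h2 := hA b j
      exact ⟨b, hbj, by linarith⟩
  -- conclusion
  refine ⟨ε, fun j => ?_⟩
  obtain ⟨i₀, hi₀ne, hi₀⟩ := hB j
  have hminj : ∀ i, ε j + N j j ≤ ε i + N i j := by
    intro i
    have := hA i j
    simp only [hcdef, cc] at this
    linarith
  have heq : ε i₀ + N i₀ j = ε j + N j j := by
    simp only [hcdef, cc] at hi₀
    linarith
  exact ⟨j, i₀, hi₀ne.symm, fun i => hminj i, fun i => by rw [heq]; exact hminj i⟩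

end Core

/-- Square case: a tropically singular matrix admits a tropical kernel vector. -/
theorem square (N : Matrix (Fin m) (Fin m) ℝ) (h : TropSingular N) :
    ∃ g : Fin m → ℝ, ∀ j, Bal g (fun i => N i j) := by
  obtain ⟨σ, τ, hne, heq, hmin⟩ := h
  set N' : Matrix (Fin m) (Fin m) ℝ := Matrix.of (fun i j => N i (σ j)) with hN'
  set π : Equiv.Perm (Fin m) := σ⁻¹ * τ with hπdef
  have hπ : π ≠ 1 := by
    intro h1
    exact hne (inv_mul_eq_one.mp h1)
  have hid : ∀ ρ : Equiv.Perm (Fin m), ∑ i, N' i i ≤ ∑ i, N' i (ρ i) := by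
    intro ρ
    have h1 : ∑ i, N' i i = ∑ i, N i (σ i) := rfl
    have h2 : ∑ i, N' i (ρ i) = ∑ i, N i ((σ * ρ) i) := rfl
    rw [h1, h2]
    exact hmin (σ * ρ)
  have hπe : ∑ i, N' i (π i) = ∑ i, N' i i := by
    have h1 : ∑ i, N' i (π i) = ∑ i, N i (τ i) := by
      apply Finset.sum_congr rfl
      intro i _
      show N i (σ ((σ⁻¹ * τ) i)) = N i (τ i)
      rw [Equiv.Perm.mul_apply, Equiv.Perm.apply_inv_self]
    have h2 : ∑ i, N' i i = ∑ i, N i (σ i) := rfl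
    rw [h1, h2, heq]
  obtain ⟨g, hg⟩ := core N' π hπ hid hπe
  refine ⟨g, fun j => ?_⟩
  have := hg (σ⁻¹ j)
  have hcol : (fun i => N' i (σ⁻¹ j)) = (fun i => N i j) := by
    funext i
    show N i (σ (σ⁻¹ j)) = N i j
    rw [Equiv.Perm.apply_inv_self]
  rwa [hcol] at this

/-- Tropical Cramer dependence: any `m × (m+1)` matrix has a dependence vector. -/
theorem cramer (X : Fin m → Fin (m + 1) → ℝ) :
    ∃ lam : Fin (m + 1) → ℝ, ∀ i : Fin m, Bal lam (X i) := by
  classical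
  set F : Equiv.Perm (Fin (m + 1)) → ℝ := fun σ => ∑ r : Fin m, X r (σ r.castSucc) with hF
  set Sf : Fin (m + 1) → Finset (Equiv.Perm (Fin (m + 1))) :=
    fun k => Finset.univ.filter (fun σ => σ (Fin.last m) = k) with hSf
  have hSfne : ∀ k, (Sf k).Nonempty := by
    intro k
    refine ⟨Equiv.swap (Fin.last m) k, ?_⟩
    simp [hSf, Equiv.swap_apply_left]
  set lam : Fin (m + 1) → ℝ := fun k => (Sf k).inf' (hSfne k) F with hlam
  refine ⟨lam, fun i => ?_⟩
  set G : Equiv.Perm (Fin (m + 1)) → ℝ := fun σ => F σ + X i (σ (Fin.last m)) with hG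
  obtain ⟨σs, _, hσs⟩ := Finset.exists_min_image Finset.univ G Finset.univ_nonempty
  have hlb : ∀ k, G σs ≤ lam k + X i k := by
    intro k
    obtain ⟨σk, hσkmem, hσk⟩ := Finset.exists_mem_eq_inf' (hSfne k) F
    have hσklast : σk (Fin.last m) = k := (Finset.mem_filter.mp hσkmem).2
    have h1 : lam k = F σk := hσk
    have h2 : lam k + X i k = G σk := by
      show lam k + X i k = F σk + X i (σk (Fin.last m))
      rw [h1, hσklast]
    rw [h2]
    exact hσs σk (Finset.mem_univ σk)
  have hat : ∀ σ : Equiv.Perm (Fin (m + 1)), G σ = G σs →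
      lam (σ (Fin.last m)) + X i (σ (Fin.last m)) ≤ G σs := by
    intro σ hσ
    have hmem : σ ∈ Sf (σ (Fin.last m)) := Finset.mem_filter.mpr ⟨Finset.mem_univ _, rfl⟩
    have hlamle : lam (σ (Fin.last m)) ≤ F σ := Finset.inf'_le F hmem
    have hGσ : G σ = F σ + X i (σ (Fin.last m)) := rfl
    rw [← hσ, hGσ]
    linarith
  -- the paired permutation
  set ρ : Equiv.Perm (Fin (m + 1)) := Equiv.swap (Fin.castSucc i) (Fin.last m) with hρ
  set σ' : Equiv.Perm (Fin (m + 1)) := σs * ρ with hσ'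
  have hcsl : (Fin.castSucc i) ≠ Fin.last m := Fin.castSucc_lt_last i |>.ne
  have hσ'last : σ' (Fin.last m) = σs i.castSucc := by
    rw [hσ', Equiv.Perm.mul_apply, hρ, Equiv.swap_apply_right]
  have hσ'i : σ' i.castSucc = σs (Fin.last m) := by
    rw [hσ', Equiv.Perm.mul_apply, hρ, Equiv.swap_apply_left]
  have hσ'other : ∀ r : Fin m, r ≠ i → σ' r.castSucc = σs r.castSucc := by
    intro r hr
    rw [hσ', Equiv.Perm.mul_apply, hρ, Equiv.swap_apply_of_ne_of_ne]
    · exact fun h => hr (Fin.castSucc_injective m h)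
    · exact (Fin.castSucc_lt_last r).ne
  have hGσ' : G σ' = G σs := by
    have hFs : F σ' = F σs - X i (σs i.castSucc) + X i (σs (Fin.last m)) := by
      have e1 : X i (σ' i.castSucc) + ∑ r ∈ Finset.univ.erase i, X r (σ' r.castSucc)
          = ∑ r : Fin m, X r (σ' r.castSucc) :=
        Finset.add_sum_erase Finset.univ (fun r => X r (σ' r.castSucc)) (Finset.mem_univ i)
      have e2 : X i (σs i.castSucc) + ∑ r ∈ Finset.univ.erase i, X r (σs r.castSucc)
          = ∑ r : Fin m, X r (σs r.castSucc) :=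
        Finset.add_sum_erase Finset.univ (fun r => X r (σs r.castSucc)) (Finset.mem_univ i)
      have ecore : ∑ r ∈ Finset.univ.erase i, X r (σ' r.castSucc)
          = ∑ r ∈ Finset.univ.erase i, X r (σs r.castSucc) := by
        apply Finset.sum_congr rfl
        intro r hr
        rw [hσ'other r (Finset.mem_erase.mp hr).1]
      simp only [hF]
      rw [← e1, ← e2, ecore, hσ'i]
      ring
    simp only [hG]
    rw [hFs, hσ'last]
    ring
  have hkne : σ' (Fin.last m) ≠ σs (Fin.last m) := by
    rw [hσ'last]
    intro h
    exact hcsl (σs.injective h)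
  -- both attain
  have h1 : lam (σs (Fin.last m)) + X i (σs (Fin.last m)) ≤ G σs := hat σs rfl
  have h2 : lam (σ' (Fin.last m)) + X i (σ' (Fin.last m)) ≤ G σs := hat σ' hGσ'
  refine ⟨σs (Fin.last m), σ' (Fin.last m), hkne.symm, ?_, ?_⟩
  · intro k
    have := hlb k
    linarith
  · intro k
    have := hlb k
    linarith

/-- Repeated columns make a matrix tropically singular. -/
lemma tropSingular_of_eq_col (M : Matrix (Fin m) (Fin m) ℝ) (a b : Fin m) (hab : a ≠ b)
    (hcol : ∀ i, M i a = M i b) : TropSingular M := by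
  classical
  obtain ⟨ρ, _, hρ⟩ := Finset.exists_min_image Finset.univ
    (fun ρ : Equiv.Perm (Fin m) => ∑ i, M i (ρ i)) Finset.univ_nonempty
  set τ : Equiv.Perm (Fin m) := (Equiv.swap a b) * ρ with hτ
  have htermeq : ∀ i, M i (τ i) = M i (ρ i) := by
    intro i
    rw [hτ, Equiv.Perm.mul_apply]
    by_cases h1 : ρ i = a
    · rw [h1, Equiv.swap_apply_left, ← hcol]
    by_cases h2 : ρ i = b
    · rw [h2, Equiv.swap_apply_right, hcol]
    · rw [Equiv.swap_apply_of_ne_of_ne h1 h2]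
  have hsum : ∑ i, M i (ρ i) = ∑ i, M i (τ i) :=
    Finset.sum_congr rfl (fun i _ => (htermeq i).symm)
  have hneq : ρ ≠ τ := by
    intro h
    have : τ (ρ⁻¹ a) = a := by rw [← h]; exact Equiv.Perm.apply_inv_self ρ a
    rw [hτ, Equiv.Perm.mul_apply, Equiv.Perm.apply_inv_self, Equiv.swap_apply_left] at this
    exact hab this.symm
  exact ⟨ρ, τ, hneq, hsum, fun ρ' => hρ ρ' (Finset.mem_univ ρ')⟩

/-- Main induction: 4×n matrices all of whose 4×4 minors are singular have a kernel vector. -/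
theorem main4 : ∀ (n : ℕ) (W : Fin n → Fin 4 → ℝ),
    (∀ c : Fin 4 → Fin n, TropSingular (Matrix.of fun i j => W (c j) i)) →
    ∃ g : Fin 4 → ℝ, ∀ j, Bal g (W j) := by
  intro n
  induction n with
  | zero => exact fun W _ => ⟨0, fun j => j.elim0⟩
  | succ n IH =>
    intro W hW
    by_cases hn : n + 1 ≤ 4
    · -- few columns: use the square case directly
      set cmap : Fin 4 → Fin (n + 1) := fun k => ⟨min k.val n, by omega⟩ with hcmap
      obtain ⟨g, hg⟩ := square (Matrix.of fun i k => W (cmap k) i) (hW cmap)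
      refine ⟨g, fun j => ?_⟩
      have hj4 : (j : ℕ) < 4 := by omega
      have : cmap ⟨j.val, hj4⟩ = j := by
        simp only [hcmap]
        ext
        simp only []
        omega
      have := hg ⟨j.val, hj4⟩
      rw [show (fun i => Matrix.of (fun i k => W (cmap k) i) i ⟨j.val, hj4⟩) = W j from ?_] at this
      · exact this
      · funext i
        show W (cmap ⟨j.val, hj4⟩) i = W j i
        rw [‹cmap ⟨j.val, hj4⟩ = j›]
    · -- many columns: Helly induction
      have h5 : 5 ≤ n + 1 := by omega
      set ℓ : Fin 5 → Fin (n + 1) := fun k => Fin.castLE h5 k with hℓ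
      have hℓinj : Function.Injective ℓ := fun a b h => Fin.castLE_injective h5 h
      -- leave-one-out solutions
      have Hk : ∀ k : Fin 5, ∃ g : Fin 4 → ℝ,
          ∀ j' : Fin n, Bal g (W ((ℓ k).succAbove j')) := by
        intro k
        apply IH (fun j' => W ((ℓ k).succAbove j'))
        intro c
        exact hW (fun t => (ℓ k).succAbove (c t))
      choose x hx using Hk
      have hxj : ∀ (k : Fin 5) (j : Fin (n + 1)), j ≠ ℓ k → Bal (x k) (W j) := by
        intro k j hj
        obtain ⟨j', hj'⟩ := Fin.exists_succAbove_eq hj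
        rw [← hj']
        exact hx k j'
      obtain ⟨lam, hlam⟩ := cramer (m := 4) (fun i k => x k i)
      set g : Fin 4 → ℝ := fun i =>
        (Finset.univ : Finset (Fin 5)).inf' Finset.univ_nonempty (fun k => lam k + x k i)
        with hg
      have hgle : ∀ i k, g i ≤ lam k + x k i := by
        intro i k
        exact Finset.inf'_le _ (Finset.mem_univ k)
      refine ⟨g, fun j => ?_⟩
      obtain ⟨istar, _, histar⟩ := Finset.exists_min_image Finset.univ
        (fun i => g i + W j i) Finset.univ_nonempty
      obtain ⟨k1, k2, hk12, hk1, hk2⟩ := hlam istar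
      -- pick an attaining k with ℓ k ≠ j
      have hpick : ∃ k : Fin 5, ℓ k ≠ j ∧ ∀ k', lam k + x k istar ≤ lam k' + x k' istar := by
        by_cases h1 : ℓ k1 = j
        · refine ⟨k2, ?_, hk2⟩
          intro h2
          exact hk12 (hℓinj (h1.trans h2.symm))
        · exact ⟨k1, h1, hk1⟩
      obtain ⟨k, hkj, hkatt⟩ := hpick
      have hgeq : g istar = lam k + x k istar := by
        apply le_antisymm (hgle istar k)
        obtain ⟨k0, _, hk0⟩ := Finset.exists_mem_eq_inf' (Finset.univ_nonempty
          (α := Fin 5)) (fun k => lam k + x k istar)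
        have h0 : g istar = lam k0 + x k0 istar := hk0
        rw [h0]
        exact hkatt k0
      obtain ⟨a, b, hab, ha, hb⟩ := hxj k j (fun h => hkj h.symm)
      have hkey : ∀ (p : Fin 4), (∀ i, x k p + W j p ≤ x k i + W j i) →
          ∀ i, g p + W j p ≤ g i + W j i := by
        intro p hp i
        calc g p + W j p ≤ (lam k + x k p) + W j p := by
              have := hgle p k; linarith
          _ ≤ (lam k + x k istar) + W j istar := by
              have := hp istar; linarith
          _ = g istar + W j istar := by rw [hgeq]
          _ ≤ g i + W j i := histar i (Finset.mem_univ i)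
      exact ⟨a, b, hab, hkey a ha, hkey b hb⟩

end TropAux

/-- If every `4 × 4` submatrix of the `5 × n` real matrix `A` is tropically singular, then
for each `i` there is an `i`-coordinate hyperplane for the columns of `A`: a vector `h`
such that for every column `w` of `A`, the minimum of `h j + w j` is attained at least
twice and not at index `i`. -/
theorem exists_coordinate_hyperplane (n : ℕ) (A : Matrix (Fin 5) (Fin n) ℝ)
    (hsing : ∀ (r : Fin 4 → Fin 5) (c : Fin 4 → Fin n),
      Function.Injective r → Function.Injective c → TropSingular (A.submatrix r c)) :
    ∀ i : Fin 5, ∃ h : Fin 5 → ℝ, ∀ col : Fin n,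
      (∃ a b : Fin 5, a ≠ b ∧ a ∈ typeSet h (fun s => A s col) ∧
        b ∈ typeSet h (fun s => A s col)) ∧
      i ∉ typeSet h (fun s => A s col) := by
  classical
  intro i
  rcases Nat.eq_zero_or_pos n with hn0 | hnpos
  · subst hn0
    exact ⟨0, fun col => col.elim0⟩
  set W : Fin n → Fin 4 → ℝ := fun col k => A (i.succAbove k) col with hW
  have hhyp : ∀ c : Fin 4 → Fin n, TropSingular (Matrix.of fun a b => W (c b) a) := by
    intro c
    by_cases hc : Function.Injective c
    · exact hsing i.succAbove c Fin.succAbove_right_injective hc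
    · rw [Function.not_injective_iff] at hc
      obtain ⟨a, b, hcab, hab⟩ := hc
      apply TropAux.tropSingular_of_eq_col _ a b hab
      intro x
      show W (c a) x = W (c b) x
      rw [hcab]
  obtain ⟨g, hg⟩ := TropAux.main4 n W hhyp
  -- the big value at coordinate i
  have hne : ((Finset.univ : Finset (Fin n × Fin 4))).Nonempty := by
    refine ⟨(⟨0, hnpos⟩, 0), Finset.mem_univ _⟩
  set BIG : ℝ := 1 + Finset.univ.sup' hne (fun p : Fin n × Fin 4 => g p.2 + W p.1 p.2 - A i p.1)
    with hBIG
  have hBIGgt : ∀ (col : Fin n) (k : Fin 4), g k + W col k < BIG + A i col := by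
    intro col k
    have := Finset.le_sup' (fun p : Fin n × Fin 4 => g p.2 + W p.1 p.2 - A i p.1)
      (Finset.mem_univ (col, k))
    rw [hBIG]
    simp only at this
    linarith
  set h : Fin 5 → ℝ := fun x =>
    if hx : x = i then BIG else g (Classical.choose (Fin.exists_succAbove_eq hx))
    with hh
  have hhi : h i = BIG := by rw [hh]; simp
  have hhsa : ∀ k : Fin 4, h (i.succAbove k) = g k := by
    intro k
    have hne' : i.succAbove k ≠ i := Fin.succAbove_ne i k
    have h1 : h (i.succAbove k)
        = g (Classical.choose (Fin.exists_succAbove_eq hne')) := dif_neg hne'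
    rw [h1]
    congr 1
    have hspec := Classical.choose_spec (Fin.exists_succAbove_eq hne')
    exact Fin.succAbove_right_injective hspec
  refine ⟨h, fun col => ?_⟩
  obtain ⟨a, b, hab, ha, hb⟩ := hg col
  have hmem : ∀ (p : Fin 4), (∀ k, g p + W col p ≤ g k + W col k) →
      i.succAbove p ∈ typeSet h (fun s => A s col) := by
    intro p hp
    intro j
    show h (i.succAbove p) + A (i.succAbove p) col ≤ h j + A j col
    rw [hhsa p]
    by_cases hji : j = i
    · rw [hji, hhi]
      have hb2 := hBIGgt col p
      show g p + W col p ≤ BIG + A i col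
      linarith
    · obtain ⟨k, hk⟩ := Fin.exists_succAbove_eq (show j ≠ i from hji)
      rw [← hk, hhsa k]
      exact hp k
  constructor
  · exact ⟨i.succAbove a, i.succAbove b,
      fun hh' => hab (Fin.succAbove_right_injective hh'), hmem a ha, hmem b hb⟩
  · intro hmemi
    have h1 := hmemi (i.succAbove a)
    rw [hhi, hhsa a] at h1
    have := hBIGgt col a
    show False
    have : BIG + A i col < BIG + A i col := lt_of_le_of_lt h1 this
    exact lt_irrefl _ this
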